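/- Let S be a semigroup, ω a complete congruence on S, and f : S → [0,1] a fuzzy left-ideal membership function, i.e. f(x*y) ≥ f(y) for all x, y ∈ S. Then the lower approximation f̲(z) = ⨅_{z' ∈ [z]ω} f(z') satisfies f̲(x*y) ≥ f̲(y) for all x, y ∈ S. (Theorem 4.4, interval-membership component.) -/

import Mathlib

open unitInterval

instance : Fact ((0:ℝ) ≤ 1) := ⟨zero_le_one⟩

/-- Lower rough approximation: infimum of `f` over the ω-class of `z`. -/
noncomputable def lowerApp {S : Type*} (ω : S → S → Prop) (f : S → unitInterval) (z : S) :
    unitInterval :=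
  ⨅ z' : {z' : S // ω z z'}, f z'.1

/-- Upper rough approximation: supremum of `f` over the ω-class of `z`. -/
noncomputable def upperApp {S : Type*} (ω : S → S → Prop) (f : S → unitInterval) (z : S) :
    unitInterval :=
  ⨆ z' : {z' : S // ω z z'}, f z'.1

theorem lowerApp_leftIdeal_ge {S : Type*} [Semigroup S]
    (ω : S → S → Prop) (hEquiv : Equivalence ω)
    (hCong : ∀ x x' y y', ω x x' → ω y y' → ω (x * y) (x' * y'))
    (hComplete : ∀ x y c, ω (x * y) c → ∃ a b, ω x a ∧ ω y b ∧ c = a * b)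
    (f : S → unitInterval)
    (hf : ∀ x y : S, f y ≤ f (x * y)) :
    ∀ x y : S, lowerApp ω f y ≤ lowerApp ω f (x * y) := by
  intro x y
  unfold lowerApp
  apply le_iInf
  rintro ⟨c, hc⟩
  obtain ⟨a, b, _, hyb, rfl⟩ := hComplete x y c hc
  calc (⨅ z' : {z' : S // ω y z'}, f z'.1) ≤ f b := iInf_le _ (⟨b, hyb⟩ : {z' : S // ω y z'})
    _ ≤ f (a * b) := hf a b
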